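/- Fix a finite set B of odd cardinality 2T+1 and a monotone {0,1}-valued function f on subsets of B. Then ∑_{I ⊆ B, |I| = T} f(I)(1 − f(B∖I)) ≤ ∑_{J ⊆ B, |J| = T+1} f(J)(1 − f(B∖J)). -/
import Mathlib

open scoped BigOperators

theorem stmt2 {α : Type*} [DecidableEq α] (B : Finset α) (T : ℕ) (hB : B.card = 2 * T + 1)
    (f : Finset α → ℝ) (hf01 : ∀ I, f I = 0 ∨ f I = 1)
    (hmono : ∀ I J : Finset α, I ⊆ J → f I ≤ f J) :
    ∑ I ∈ B.powerset.filter (fun I => I.card = T), f I * (1 - f (B \ I)) ≤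
      ∑ J ∈ B.powerset.filter (fun J => J.card = T + 1), f J * (1 - f (B \ J)) := by
  set g : Finset α → ℝ := fun I => f I * (1 - f (B \ I)) with hg
  set A := B.powerset.filter (fun I => I.card = T) with hA
  set C := B.powerset.filter (fun J => J.card = T + 1) with hC
  have hg0 : ∀ I, 0 ≤ g I := by
    intro I
    rcases hf01 I with h | h <;> rcases hf01 (B \ I) with h' | h' <;>
      simp [hg, h, h']
  have key : ∀ I J : Finset α, I ⊆ J → J ⊆ B → g I ≤ g J := by
    intro I J hIJ hJB
    rcases hf01 I with h | h
    · calc g I = 0 := by simp [hg, h]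
        _ ≤ g J := hg0 J
    rcases hf01 (B \ I) with h' | h'
    · have hfJ : f J = 1 := by
        have := hmono I J hIJ
        rcases hf01 J with hJ | hJ
        · rw [h, hJ] at this; linarith
        · exact hJ
      have hfBJ : f (B \ J) = 0 := by
        have hsub : B \ J ⊆ B \ I := Finset.sdiff_subset_sdiff (le_refl B) hIJ
        have := hmono _ _ hsub
        rcases hf01 (B \ J) with hJ | hJ
        · exact hJ
        · rw [hJ, h'] at this; linarith
      simp [hg, h, h', hfJ, hfBJ]
    · calc g I = 0 := by simp [hg, h']
        _ ≤ g J := hg0 J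
  -- count of (T+1)-supersets of a T-set
  have count1 : ∀ I ∈ A, (C.filter (fun J => I ⊆ J)).card = T + 1 := by
    intro I hI
    rw [hA, Finset.mem_filter, Finset.mem_powerset] at hI
    obtain ⟨hIB, hIcard⟩ := hI
    have himg : C.filter (fun J => I ⊆ J) = (B \ I).image (fun x => insert x I) := by
      ext J
      simp only [Finset.mem_filter, Finset.mem_image, Finset.mem_powerset, hC,
        Finset.mem_sdiff]
      constructor
      · rintro ⟨⟨hJB, hJcard⟩, hIJ⟩
        have hcd : (J \ I).card = 1 := by
          rw [Finset.card_sdiff_of_subset hIJ, hJcard, hIcard]; omega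
        obtain ⟨x, hx⟩ := Finset.card_eq_one.mp hcd
        refine ⟨x, ⟨hJB (Finset.mem_sdiff.mp (hx ▸ Finset.mem_singleton_self x)).1,
          (Finset.mem_sdiff.mp (hx ▸ Finset.mem_singleton_self x)).2⟩, ?_⟩
        have hxJ := Finset.mem_sdiff.mp (hx ▸ Finset.mem_singleton_self x)
        apply Finset.Subset.antisymm
        · intro y hy
          rcases Finset.mem_insert.mp hy with rfl | hy
          · exact hxJ.1
          · exact hIJ hy
        · intro y hy
          by_cases hyI : y ∈ I
          · exact Finset.mem_insert_of_mem hyI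
          · have : y ∈ J \ I := Finset.mem_sdiff.mpr ⟨hy, hyI⟩
            rw [hx, Finset.mem_singleton] at this
            exact this ▸ Finset.mem_insert_self _ _

      · rintro ⟨x, ⟨hxB, hxI⟩, rfl⟩
        refine ⟨⟨?_, ?_⟩, Finset.subset_insert _ _⟩
        · exact Finset.insert_subset hxB hIB
        · rw [Finset.card_insert_of_notMem hxI, hIcard]
    rw [himg, Finset.card_image_of_injOn, Finset.card_sdiff_of_subset hIB, hB, hIcard]
    · omega
    · intro x hx y hy hxy
      rw [Finset.mem_coe, Finset.mem_sdiff] at hx hy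
      have hxy' : insert x I = insert y I := hxy
      have : x ∈ insert y I := by rw [← hxy']; exact Finset.mem_insert_self x I
      rcases Finset.mem_insert.mp this with h | h
      · exact h
      · exact absurd h hx.2
  -- count of T-subsets of a (T+1)-set
  have count2 : ∀ J ∈ C, (A.filter (fun I => I ⊆ J)).card = T + 1 := by
    intro J hJ
    rw [hC, Finset.mem_filter, Finset.mem_powerset] at hJ
    obtain ⟨hJB, hJcard⟩ := hJ
    have heq : A.filter (fun I => I ⊆ J) = J.powersetCard T := by
      ext I
      simp only [Finset.mem_filter, Finset.mem_powerset, Finset.mem_powersetCard, hA]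
      constructor
      · rintro ⟨⟨_, h2⟩, h3⟩; exact ⟨h3, h2⟩
      · rintro ⟨h1, h2⟩; exact ⟨⟨h1.trans hJB, h2⟩, h1⟩
    rw [heq, Finset.card_powersetCard, hJcard, Nat.choose_succ_self_right]
  have main : (T + 1 : ℝ) * ∑ I ∈ A, g I ≤ (T + 1 : ℝ) * ∑ J ∈ C, g J := by
    have step1 : (T + 1 : ℝ) * ∑ I ∈ A, g I
        = ∑ I ∈ A, ∑ J ∈ C, (if I ⊆ J then g I else 0) := by
      rw [Finset.mul_sum]
      refine Finset.sum_congr rfl fun I hI => ?_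
      rw [← Finset.sum_filter, Finset.sum_const, count1 I hI, nsmul_eq_mul]
      push_cast
      ring
    have step2 : ∑ J ∈ C, ∑ I ∈ A, (if I ⊆ J then g J else 0)
        = (T + 1 : ℝ) * ∑ J ∈ C, g J := by
      rw [Finset.mul_sum]
      refine Finset.sum_congr rfl fun J hJ => ?_
      rw [← Finset.sum_filter, Finset.sum_const, count2 J hJ, nsmul_eq_mul]
      push_cast
      ring
    rw [step1, ← step2, Finset.sum_comm]
    refine Finset.sum_le_sum fun J hJ => Finset.sum_le_sum fun I hI => ?_
    split_ifs with h
    · refine key I J h ?_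
      rw [hC, Finset.mem_filter, Finset.mem_powerset] at hJ
      exact hJ.1
    · exact le_refl 0
  have hpos : (0 : ℝ) < T + 1 := by positivity
  exact le_of_mul_le_mul_left main hpos
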